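/- For ν > 0, λ ∈ (0,1), and θ ≥ 0, one has the identity (ν+θ) ∫₀¹ x^{ν+θ+λ-1} (1-x)^{-λ} dx = Γ(ν+λ)Γ(1-λ)/Γ(ν) + λ ∫₀^∞ (1 - e^{-θx}) e^{x(1-ν)} (e^x - 1)^{-λ-1} dx. -/

import Mathlib

open Real MeasureTheory Set Filter


lemma betaIntegrableOn {p q : ℝ} (hp : 0 < p) (hq : 0 < q) :
    IntegrableOn (fun x : ℝ => x ^ (p - 1) * (1 - x) ^ (q - 1)) (Ioo 0 1) := by
  have h := (Complex.betaIntegral_convergent (u := (p : ℂ)) (v := (q : ℂ))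
      (by simpa using hp) (by simpa using hq)).norm
  rw [intervalIntegrable_iff_integrableOn_Ioc_of_le zero_le_one] at h
  refine (h.mono_set Ioo_subset_Ioc_self).congr_fun (fun x hx => ?_) measurableSet_Ioo
  have hx0 : (0:ℝ) < x := hx.1
  have hx1 : (0:ℝ) < 1 - x := by linarith [hx.2]
  have h1 : (1 - (x:ℂ)) = ((1 - x : ℝ) : ℂ) := by push_cast; ring
  beta_reduce
  rw [norm_mul, h1,
    Complex.norm_cpow_eq_rpow_re_of_pos hx0, Complex.norm_cpow_eq_rpow_re_of_pos hx1]
  norm_num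


lemma betaValue {p q : ℝ} (hp : 0 < p) (hq : 0 < q) :
    Real.Gamma p * Real.Gamma q
      = Real.Gamma (p + q) * ∫ x in Ioo (0:ℝ) 1, x ^ (p - 1) * (1 - x) ^ (q - 1) := by
  have h := Complex.Gamma_mul_Gamma_eq_betaIntegral (s := (p:ℂ)) (t := (q:ℂ))
    (by simpa using hp) (by simpa using hq)
  have hbeta : Complex.betaIntegral (p:ℂ) (q:ℂ)
      = ((∫ x in Ioo (0:ℝ) 1, x ^ (p - 1) * (1 - x) ^ (q - 1) : ℝ) : ℂ) := by
    rw [Complex.betaIntegral]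
    have : (∫ x : ℝ in (0:ℝ)..1, (x:ℂ) ^ ((p:ℂ) - 1) * (1 - (x:ℂ)) ^ ((q:ℂ) - 1))
        = ∫ x : ℝ in (0:ℝ)..1, ((x ^ (p - 1) * (1 - x) ^ (q - 1) : ℝ) : ℂ) := by
      refine intervalIntegral.integral_congr fun x hx => ?_
      rw [uIcc_of_le zero_le_one] at hx
      have hx0 : (0:ℝ) ≤ x := hx.1
      have hx1 : (0:ℝ) ≤ 1 - x := by linarith [hx.2]
      rw [Complex.ofReal_mul, Complex.ofReal_cpow hx0, Complex.ofReal_cpow hx1]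
      push_cast
      ring
    rw [this, intervalIntegral.integral_ofReal,
      intervalIntegral.integral_of_le zero_le_one, integral_Ioc_eq_integral_Ioo]
  rw [hbeta, ← Complex.ofReal_add, Complex.Gamma_ofReal, Complex.Gamma_ofReal,
    Complex.Gamma_ofReal, ← Complex.ofReal_mul, ← Complex.ofReal_mul] at h
  exact_mod_cast h


lemma image_exp_neg : (fun x : ℝ => Real.exp (-x)) '' (Ioi 0) = Ioo 0 1 := by
  ext u
  constructor
  · rintro ⟨x, hx, rfl⟩
    exact ⟨Real.exp_pos _, by rw [Real.exp_lt_one_iff]; simpa using (mem_Ioi.mp hx)⟩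
  · rintro ⟨hu0, hu1⟩
    exact ⟨-Real.log u, by simpa using Real.log_neg hu0 hu1, by simp [Real.exp_log hu0]⟩

lemma substitution (ν lam θ : ℝ) (hθ : 0 ≤ θ) :
    (∫ x in Set.Ioi (0 : ℝ),
        (1 - Real.exp (-θ * x)) * Real.exp (x * (1 - ν)) * (Real.exp x - 1) ^ (-lam - 1))
      = ∫ u in Ioo (0:ℝ) 1, (1 - u ^ θ) * u ^ (ν + lam - 1) * (1 - u) ^ (-lam - 1) := by
  have key := integral_image_eq_integral_abs_deriv_smul (s := Ioi (0:ℝ))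
    (f := fun x => Real.exp (-x)) (f' := fun x => -Real.exp (-x)) measurableSet_Ioi
    (fun x _ => by
      have : HasDerivAt (fun x : ℝ => Real.exp (-x)) (-Real.exp (-x)) x := by
        simpa using (hasDerivAt_neg x).exp
      exact this.hasDerivWithinAt)
    (fun a _ b _ h => by
      have := Real.exp_injective h; linarith [neg_injective this])
    (fun u => (1 - u ^ θ) * u ^ (ν + lam - 1) * (1 - u) ^ (-lam - 1))
  rw [image_exp_neg] at key
  rw [key]
  refine setIntegral_congr_fun measurableSet_Ioi fun x hx => ?_
  have hx0 : (0:ℝ) < x := hx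
  have he : (0:ℝ) < Real.exp (-x) := Real.exp_pos _
  have he1 : Real.exp (-x) < 1 := by rw [Real.exp_lt_one_iff]; linarith
  have h1 : Real.exp (-x) ^ θ = Real.exp (-θ * x) := by
    rw [← Real.exp_mul]; ring_nf
  have h2 : Real.exp (-x) ^ (ν + lam - 1) = Real.exp (-x * (ν + lam - 1)) := by
    rw [← Real.exp_mul]
  have h3 : Real.exp x - 1 = Real.exp x * (1 - Real.exp (-x)) := by
    rw [mul_sub, ← Real.exp_add]; simp
  have h4 : (Real.exp x - 1) ^ (-lam - 1)
      = Real.exp (x * (-lam - 1)) * (1 - Real.exp (-x)) ^ (-lam - 1) := by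
    rw [h3, Real.mul_rpow (Real.exp_pos x).le (by linarith), ← Real.exp_mul]
  rw [smul_eq_mul, abs_of_neg (by simpa using he), neg_neg, h1, h2, h4]
  rw [show Real.exp (-x) * ((1 - Real.exp (-θ * x)) * Real.exp (-x * (ν + lam - 1)) *
        (1 - Real.exp (-x)) ^ (-lam - 1))
      = (1 - Real.exp (-θ * x)) * (Real.exp (-x) * Real.exp (-x * (ν + lam - 1))) *
        (1 - Real.exp (-x)) ^ (-lam - 1) by ring,
    ← Real.exp_add]
  rw [show (1 - Real.exp (-θ * x)) * Real.exp (x * (1 - ν)) *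
        (Real.exp (x * (-lam - 1)) * (1 - Real.exp (-x)) ^ (-lam - 1))
      = (1 - Real.exp (-θ * x)) * (Real.exp (x * (1 - ν)) * Real.exp (x * (-lam - 1))) *
        (1 - Real.exp (-x)) ^ (-lam - 1) by ring, ← Real.exp_add]
  ring_nf

lemma one_sub_rpow_le {u θ : ℝ} (hu0 : 0 < u) (hu1 : u ≤ 1) (hθ : 0 ≤ θ) :
    1 - u ^ θ ≤ (1 + θ) * (1 - u) := by
  rcases le_total θ 1 with h | h
  · have : u ^ (1:ℝ) ≤ u ^ θ := Real.rpow_le_rpow_of_exponent_ge hu0 hu1 h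
    rw [Real.rpow_one] at this
    nlinarith
  · have hb := one_add_mul_self_le_rpow_one_add (s := u - 1) (by linarith) h
    rw [show 1 + (u - 1) = u by ring] at hb
    nlinarith

lemma key_identity (ν lam θ : ℝ) (hν : 0 < ν) (hl0 : 0 < lam) (hl1 : lam < 1) (hθ : 0 ≤ θ) :
    (ν + θ) * ∫ x in Ioo (0:ℝ) 1, x ^ (ν + θ + lam - 1) * (1 - x) ^ (-lam)
      = ν * (∫ x in Ioo (0:ℝ) 1, x ^ (ν + lam - 1) * (1 - x) ^ (-lam))
        + lam * ∫ u in Ioo (0:ℝ) 1, (1 - u ^ θ) * u ^ (ν + lam - 1) * (1 - u) ^ (-lam - 1) := by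
  set Aθ : ℝ → ℝ := fun x => x ^ (ν + θ + lam - 1) * (1 - x) ^ (-lam) with hAθ
  set A0 : ℝ → ℝ := fun x => x ^ (ν + lam - 1) * (1 - x) ^ (-lam) with hA0
  set C : ℝ → ℝ := fun u => (1 - u ^ θ) * u ^ (ν + lam - 1) * (1 - u) ^ (-lam - 1) with hC
  have hmlam : (-lam : ℝ) = 1 - lam - 1 := by ring
  have intAθ : IntegrableOn Aθ (Ioo (0:ℝ) 1) := by
    rw [hAθ, hmlam]
    exact betaIntegrableOn (by linarith) (by linarith : (0:ℝ) < 1 - lam)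
  have intA0 : IntegrableOn A0 (Ioo (0:ℝ) 1) := by
    rw [hA0, hmlam]
    exact betaIntegrableOn (by linarith) (by linarith : (0:ℝ) < 1 - lam)
  -- integrability of C
  have intC : IntegrableOn C (Ioo (0:ℝ) 1) := by
    refine Integrable.mono' ((intA0.const_mul (1 + θ))) ?_ ?_
    · refine (ContinuousOn.mul (ContinuousOn.mul ?_ ?_) ?_).aestronglyMeasurable
        measurableSet_Ioo
      · exact continuousOn_const.sub ((continuousOn_id).rpow_const
          fun x hx => Or.inl (ne_of_gt hx.1))
      · exact (continuousOn_id).rpow_const fun x hx => Or.inl (ne_of_gt hx.1)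
      · exact (continuousOn_const.sub continuousOn_id).rpow_const
          fun x hx => Or.inl (by show (1:ℝ) - x ≠ 0; intro h; nlinarith [hx.2, sub_eq_zero.mp h])
    · rw [ae_restrict_iff' measurableSet_Ioo]
      filter_upwards with u hu
      have hu0 : (0:ℝ) < u := hu.1
      have hu1 : u < 1 := hu.2
      have h1u : (0:ℝ) < 1 - u := by linarith
      have hup : (0:ℝ) ≤ u ^ (ν + lam - 1) := (Real.rpow_pos_of_pos hu0 _).le
      have huw : (0:ℝ) ≤ (1 - u) ^ (-lam - 1) := (Real.rpow_pos_of_pos h1u _).le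
      have ht1 : u ^ θ ≤ 1 := Real.rpow_le_one hu0.le hu1.le hθ
      have hb := one_sub_rpow_le hu0 hu1.le hθ
      have hsplit : (1 - u) * (1 - u) ^ (-lam - 1) = (1 - u) ^ (-lam) := by
        rw [show (1 - u) * (1 - u) ^ (-lam - 1) = (1 - u) ^ (1:ℝ) * (1 - u) ^ (-lam - 1) by
          rw [Real.rpow_one], ← Real.rpow_add h1u]
        ring_nf
      rw [hC, norm_mul, norm_mul, Real.norm_eq_abs, Real.norm_eq_abs, Real.norm_eq_abs,
        abs_of_nonneg (by linarith), abs_of_nonneg hup, abs_of_nonneg huw, hA0]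
      calc (1 - u ^ θ) * u ^ (ν + lam - 1) * (1 - u) ^ (-lam - 1)
          ≤ (1 + θ) * (1 - u) * u ^ (ν + lam - 1) * (1 - u) ^ (-lam - 1) := by
            apply mul_le_mul_of_nonneg_right (mul_le_mul_of_nonneg_right hb hup) huw
        _ = (1 + θ) * (u ^ (ν + lam - 1) * ((1 - u) * (1 - u) ^ (-lam - 1))) := by ring
        _ = (1 + θ) * (u ^ (ν + lam - 1) * (1 - u) ^ (-lam)) := by rw [hsplit]
  -- the primitive
  set H : ℝ → ℝ := fun u => (u ^ (ν + θ + lam) - u ^ (ν + lam)) * (1 - u) ^ (-lam) with hH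
  set H' : ℝ → ℝ := fun u => (ν + θ) * Aθ u - ν * A0 u - lam * C u with hH'
  have hderiv : ∀ u ∈ Ioo (0:ℝ) 1, HasDerivAt H (H' u) u := by
    intro u hu
    have hu0 : (0:ℝ) < u := hu.1
    have h1u : (0:ℝ) < 1 - u := by linarith [hu.2]
    have h₁ : HasDerivAt (fun u : ℝ => u ^ (ν + θ + lam))
        ((ν + θ + lam) * u ^ (ν + θ + lam - 1)) u :=
      Real.hasDerivAt_rpow_const (Or.inl hu0.ne')
    have h₂ : HasDerivAt (fun u : ℝ => u ^ (ν + lam))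
        ((ν + lam) * u ^ (ν + lam - 1)) u :=
      Real.hasDerivAt_rpow_const (Or.inl hu0.ne')
    have h₃ : HasDerivAt (fun u : ℝ => (1 - u) ^ (-lam))
        ((-lam) * (1 - u) ^ (-lam - 1) * (-1)) u := by
      exact (Real.hasDerivAt_rpow_const (p := -lam) (Or.inl h1u.ne')).comp u
        ((hasDerivAt_id u).const_sub 1)
    have h := (h₁.sub h₂).mul h₃
    refine h.congr_deriv ?_
    rw [hH', hAθ, hA0, hC]
    simp only [Pi.sub_apply]
    have e1 : u ^ (ν + θ + lam) = u ^ θ * u ^ (ν + lam - 1) * u := by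
      rw [show u ^ θ * u ^ (ν + lam - 1) * u = u ^ θ * u ^ (ν + lam - 1) * u ^ (1:ℝ) by
        rw [Real.rpow_one], ← Real.rpow_add hu0, ← Real.rpow_add hu0]
      ring_nf
    have e2 : u ^ (ν + lam) = u ^ (ν + lam - 1) * u := by
      rw [show u ^ (ν + lam - 1) * u = u ^ (ν + lam - 1) * u ^ (1:ℝ) by rw [Real.rpow_one],
        ← Real.rpow_add hu0]
      ring_nf
    have e3 : u ^ (ν + θ + lam - 1) = u ^ θ * u ^ (ν + lam - 1) := by
      rw [← Real.rpow_add hu0]; ring_nf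
    have e4 : (1 - u) ^ (-lam) = (1 - u) ^ (-lam - 1) * (1 - u) := by
      rw [show (1 - u) ^ (-lam - 1) * (1 - u) = (1 - u) ^ (-lam - 1) * (1 - u) ^ (1:ℝ) by
        rw [Real.rpow_one], ← Real.rpow_add h1u]
      ring_nf
    rw [e1, e2, e3, e4]
    ring
  have hint : IntervalIntegrable H' volume 0 1 := by
    rw [intervalIntegrable_iff_integrableOn_Ioc_of_le zero_le_one,
      integrableOn_Ioc_iff_integrableOn_Ioo]
    exact ((intAθ.const_mul _).sub (intA0.const_mul _)).sub (intC.const_mul _)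
  have h0 : Tendsto H (nhdsWithin 0 (Ioi (0:ℝ))) (nhds 0) := by
    have c1 : ContinuousAt (fun u : ℝ => u ^ (ν + θ + lam)) 0 :=
      continuousAt_id.rpow_const (Or.inr (by linarith))
    have c2 : ContinuousAt (fun u : ℝ => u ^ (ν + lam)) 0 :=
      continuousAt_id.rpow_const (Or.inr (by linarith))
    have c3 : ContinuousAt (fun u : ℝ => (1 - u) ^ (-lam)) 0 :=
      (continuousAt_const.sub continuousAt_id).rpow_const (Or.inl (by norm_num))
    have := ((c1.sub c2).mul c3).tendsto
    rw [hH]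
    have hval : ((0:ℝ) ^ (ν + θ + lam) - (0:ℝ) ^ (ν + lam)) * ((1:ℝ) - 0) ^ (-lam) = 0 := by
      rw [Real.zero_rpow (by positivity : (ν + θ + lam) ≠ 0),
        Real.zero_rpow (by positivity : (ν + lam) ≠ 0)]
      ring
    have h := this.mono_left (nhdsWithin_le_nhds (s := Ioi (0:ℝ)))
    convert h using 2
    · rfl
    · exact hval.symm
  have h1 : Tendsto H (nhdsWithin 1 (Iio (1:ℝ))) (nhds 0) := by
    have hb : Tendsto (fun u : ℝ => (1 + θ) * (1 - u) ^ (1 - lam))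
        (nhdsWithin 1 (Iio (1:ℝ))) (nhds 0) := by
      have c : ContinuousAt (fun u : ℝ => (1 + θ) * (1 - u) ^ (1 - lam)) 1 :=
        ((continuousAt_const.sub continuousAt_id).rpow_const (Or.inr (by linarith))).const_mul _
      have := c.tendsto.mono_left (nhdsWithin_le_nhds (s := Iio (1:ℝ)))
      simpa [Real.zero_rpow (by linarith : (1:ℝ) - lam ≠ 0)] using this
    refine squeeze_zero_norm' ?_ hb
    filter_upwards [Ioo_mem_nhdsLT_of_mem (show (1:ℝ) ∈ Ioc (0:ℝ) 1 by constructor <;> norm_num)]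
      with u hu
    have hu0 : (0:ℝ) < u := hu.1
    have hu1 : u < 1 := hu.2
    have h1u : (0:ℝ) < 1 - u := by linarith
    have ht1 : u ^ θ ≤ 1 := Real.rpow_le_one hu0.le hu1.le hθ
    have hsub : u ^ (ν + θ + lam) - u ^ (ν + lam) = -(u ^ (ν + lam) * (1 - u ^ θ)) := by
      rw [show ν + θ + lam = (ν + lam) + θ by ring, Real.rpow_add hu0]
      ring
    have hup1 : u ^ (ν + lam) ≤ 1 := Real.rpow_le_one hu0.le hu1.le (by linarith)
    have hw : (0:ℝ) ≤ (1 - u) ^ (-lam) := (Real.rpow_pos_of_pos h1u _).le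
    have hs : (1 - u) * (1 - u) ^ (-lam) = (1 - u) ^ (1 - lam) := by
      rw [show (1 - u) * (1 - u) ^ (-lam) = (1 - u) ^ (1:ℝ) * (1 - u) ^ (-lam) by
        rw [Real.rpow_one], ← Real.rpow_add h1u]
      ring_nf
    rw [hH]
    simp only [Real.norm_eq_abs, abs_mul]
    rw [hsub, abs_neg, abs_mul, abs_of_nonneg (Real.rpow_pos_of_pos hu0 _).le,
      abs_of_nonneg (by nlinarith : (0:ℝ) ≤ 1 - u ^ θ), abs_of_nonneg hw]
    calc u ^ (ν + lam) * (1 - u ^ θ) * (1 - u) ^ (-lam)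
        ≤ 1 * ((1 + θ) * (1 - u)) * (1 - u) ^ (-lam) := by
          apply mul_le_mul_of_nonneg_right ?_ hw
          apply mul_le_mul hup1 (one_sub_rpow_le hu0 hu1.le hθ) (by nlinarith) zero_le_one
      _ = (1 + θ) * ((1 - u) * (1 - u) ^ (-lam)) := by ring
      _ = (1 + θ) * (1 - u) ^ (1 - lam) := by rw [hs]
  have ftc := intervalIntegral.integral_eq_sub_of_hasDerivAt_of_tendsto zero_lt_one
    hderiv hint h0 h1
  rw [intervalIntegral.integral_of_le zero_le_one, integral_Ioc_eq_integral_Ioo, sub_zero] at ftc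
  have hsplit : ∫ u in Ioo (0:ℝ) 1, H' u
      = (ν + θ) * (∫ u in Ioo (0:ℝ) 1, Aθ u) - ν * (∫ u in Ioo (0:ℝ) 1, A0 u)
        - lam * ∫ u in Ioo (0:ℝ) 1, C u := by
    simp only [hH']
    have i1 : Integrable (fun u => (ν + θ) * Aθ u) (volume.restrict (Ioo (0:ℝ) 1)) :=
      intAθ.const_mul _
    have i2 : Integrable (fun u => ν * A0 u) (volume.restrict (Ioo (0:ℝ) 1)) :=
      intA0.const_mul _
    have i3 : Integrable (fun u => lam * C u) (volume.restrict (Ioo (0:ℝ) 1)) :=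
      intC.const_mul _
    have i12 : Integrable (fun u => (ν + θ) * Aθ u - ν * A0 u)
        (volume.restrict (Ioo (0:ℝ) 1)) := i1.sub i2
    rw [integral_sub i12 i3, integral_sub i1 i2,
      integral_const_mul, integral_const_mul, integral_const_mul]
  rw [hsplit] at ftc
  linarith


theorem beta_integral_levy_decomposition
    (ν lam θ : ℝ) (hν : 0 < ν) (hlam : 0 < lam ∧ lam < 1) (hθ : 0 ≤ θ) :
    (ν + θ) * ∫ x in Set.Ioo (0 : ℝ) 1, x ^ (ν + θ + lam - 1) * (1 - x) ^ (-lam)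
      = Real.Gamma (ν + lam) * Real.Gamma (1 - lam) / Real.Gamma ν
        + lam * ∫ x in Set.Ioi (0 : ℝ),
            (1 - Real.exp (-θ * x)) * Real.exp (x * (1 - ν)) *
              (Real.exp x - 1) ^ (-lam - 1) := by
  obtain ⟨hl0, hl1⟩ := hlam
  rw [substitution ν lam θ hθ]
  have hgamma : Real.Gamma (ν + lam) * Real.Gamma (1 - lam) / Real.Gamma ν
      = ν * ∫ x in Set.Ioo (0:ℝ) 1, x ^ (ν + lam - 1) * (1 - x) ^ (-lam) := by
    have hb := betaValue (p := ν + lam) (q := 1 - lam) (by linarith) (by linarith)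
    rw [show ν + lam + (1 - lam) = ν + 1 by ring, Real.Gamma_add_one hν.ne',
      show (1:ℝ) - lam - 1 = -lam by ring] at hb
    have hΓ : Real.Gamma ν ≠ 0 := (Real.Gamma_pos_of_pos hν).ne'
    field_simp
    linarith [hb]
  rw [hgamma]
  exact key_identity ν lam θ hν hl0 hl1 hθ
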